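/- Let a, b be positive integers with (a, b) ≠ (1, 1) and F the standard generalized Fibonacci sequence. Then for every odd n ≥ 1, the number of divisors of F_n is at least the number of divisors of n: τ(F_n) ≥ τ(n). -/

import Mathlib

theorem tau_fib_ge_tau_odd (a b : ℕ) (ha : 0 < a) (hb : 0 < b)
    (hab : ¬(a = 1 ∧ b = 1))
    (F : ℕ → ℕ) (hF0 : F 0 = 0) (hF1 : F 1 = 1)
    (hF : ∀ n, F (n + 2) = a * F (n + 1) + b * F n) :
    ∀ n : ℕ, Odd n → 1 ≤ n → n.divisors.card ≤ (F n).divisors.card := by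
  have hF2 : F 2 = a := by simpa [hF0, hF1] using hF 0
  -- addition formula
  have hadd : ∀ n m, F (m + 1 + n) = F (m + 1) * F (n + 1) + b * (F m * F n) := by
    intro n
    induction n using Nat.twoStepInduction with
    | zero => intro m; simp [hF0, hF1]
    | one => intro m; show F (m + 2) = _; rw [hF m, hF1, hF2]; ring
    | more n ih1 ih2 =>
      intro m
      have e3 : F (n + 2 + 1) = a * F (n + 1 + 1) + b * F (n + 1) := hF (n + 1)
      rw [show m + 1 + (n + 2) = (m + 1 + n) + 2 from by ring, hF (m + 1 + n),
        show (m + 1 + n) + 1 = m + 1 + (n + 1) from by ring, ih2 m, ih1 m,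
        e3, hF n]
      ring
  -- positivity
  have hpos : ∀ n, 1 ≤ F (n + 1) := by
    intro n
    induction n using Nat.twoStepInduction with
    | zero => simp [hF1]
    | one => rw [hF2]; exact ha
    | more n ih1 ih2 =>
      have h := hF (n + 1)
      have h1 : 0 < a * F (n + 1 + 1) := Nat.mul_pos ha ih2
      show 1 ≤ F (n + 1 + 2)
      omega
  -- divisibility
  have hdvd : ∀ k m, F m ∣ F (k * m) := by
    intro k
    induction k with
    | zero => intro m; simp [hF0]
    | succ k ih =>
      intro m
      match m with
      | 0 => simp [hF0]
      | m' + 1 =>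
        rw [show (k + 1) * (m' + 1) = m' + 1 + k * (m' + 1) from by ring,
          hadd (k * (m' + 1)) m']
        exact dvd_add (dvd_mul_right _ _) (((ih (m' + 1)).mul_left (F m')).mul_left b)
  -- strict growth by 2
  have hlt : ∀ n, 1 ≤ n → F n < F (n + 2) := by
    intro n hn
    obtain ⟨p, rfl⟩ := Nat.exists_eq_add_of_le hn
    have h := hF (1 + p)
    have h1 : 0 < a * F (1 + p + 1) :=
      Nat.mul_pos ha (by have := hpos (p + 1); exact Nat.lt_of_lt_of_le Nat.zero_lt_one (by simpa [Nat.add_comm] using this))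
    have h2 : F (1 + p) ≤ b * F (1 + p) := Nat.le_mul_of_pos_left _ hb
    omega
  have hmono : ∀ k d, 1 ≤ d → F d < F (d + 2 * k + 2) := by
    intro k
    induction k with
    | zero => intro d hd; simpa using hlt d hd
    | succ k ih =>
      intro d hd
      have h1 := ih d hd
      have h2 := hlt (d + 2 * k + 2) (by omega)
      have : d + 2 * (k + 1) + 2 = (d + 2 * k + 2) + 2 := by ring
      rw [this]
      omega
  have key : ∀ d1 d2, Odd d1 → Odd d2 → 1 ≤ d1 → d1 < d2 → F d1 < F d2 := by
    intro d1 d2 ⟨i, hi⟩ ⟨j, hj⟩ h1 hlt12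
    have : d2 = d1 + 2 * (j - i - 1) + 2 := by omega
    rw [this]
    exact hmono _ _ h1
  intro n hn hn1
  have hFn : 1 ≤ F n := by
    obtain ⟨p, rfl⟩ := Nat.exists_eq_add_of_le hn1
    simpa [Nat.add_comm] using hpos p
  have hodds : ∀ d ∈ n.divisors, Odd d := by
    intro d hd
    rcases Nat.even_or_odd d with he | ho
    · exfalso
      obtain ⟨hdn, -⟩ := Nat.mem_divisors.mp hd
      have : Even n := (even_iff_two_dvd.mpr ((even_iff_two_dvd.mp he).trans hdn))
      exact (Nat.not_odd_iff_even.mpr this) hn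
    · exact ho
  apply Finset.card_le_card_of_injOn F
  · intro d hd
    obtain ⟨hdn, hn0⟩ := Nat.mem_divisors.mp hd
    obtain ⟨k, rfl⟩ := hdn
    refine Nat.mem_divisors.mpr ⟨?_, by omega⟩
    simpa [Nat.mul_comm] using hdvd k d
  · intro d1 h1 d2 h2 heq
    have ho1 := hodds d1 h1
    have ho2 := hodds d2 h2
    have hp1 := Nat.pos_of_mem_divisors h1
    have hp2 := Nat.pos_of_mem_divisors h2
    rcases lt_trichotomy d1 d2 with h | h | h
    · exact absurd heq (Nat.ne_of_lt (key d1 d2 ho1 ho2 hp1 h))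
    · exact h
    · exact absurd heq.symm (Nat.ne_of_lt (key d2 d1 ho2 ho1 hp2 h))
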